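/- For an odd prime r, the polynomial h(x^2+2) = \sum_{k=0}^{(r-1)/2} c_k x^{r-1-2k} (where c_k = (r/(r-k))·C(r-k,k)) is irreducible over the rationals. -/

import Mathlib

open Polynomial Finset

private def ec (r k : ℕ) : ℕ :=
  if k = 0 then 1 else (r - k).choose k + (r - k - 1).choose (k - 1)

private lemma ec_key (r k : ℕ) (hk : 1 ≤ k) (hkr : 2 * k ≤ r) :
    (r - k) * ec r k = r * (r - k).choose k := by
  rw [ec, if_neg (by omega)]
  have h1 : (r - k) * (r - k - 1).choose (k - 1) = (r - k).choose k * k := by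
    have h := Nat.add_one_mul_choose_eq (r - k - 1) (k - 1)
    have e1 : r - k - 1 + 1 = r - k := by omega
    have e2 : k - 1 + 1 = k := by omega
    rwa [e1, e2] at h
  calc (r - k) * ((r - k).choose k + (r - k - 1).choose (k - 1))
      = (r - k) * (r - k).choose k + (r - k) * (r - k - 1).choose (k - 1) := by ring
    _ = (r - k) * (r - k).choose k + k * (r - k).choose k := by rw [h1]; ring
    _ = (r - k + k) * (r - k).choose k := by ring
    _ = r * (r - k).choose k := by rw [Nat.sub_add_cancel (by omega)]

private lemma ec_dvd (r k : ℕ) (hr : r.Prime) (hk : 1 ≤ k) (hkr : 2 * k ≤ r) :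
    r ∣ ec r k := by
  have h := ec_key r k hk hkr
  have hd : r ∣ ec r k * (r - k) := by
    rw [mul_comm, h]; exact Dvd.intro _ rfl
  have hcop : Nat.Coprime r (r - k) :=
    hr.coprime_iff_not_dvd.mpr (Nat.not_dvd_of_pos_of_lt (by omega) (by omega))
  exact hcop.dvd_of_dvd_mul_right hd

private lemma ec_last (m : ℕ) (hm : 1 ≤ m) : ec (2 * m + 1) m = 2 * m + 1 := by
  rw [ec, if_neg (by omega)]
  have e1 : 2 * m + 1 - m = m + 1 := by omega
  rw [e1]
  have e2 : m + 1 - 1 = m := by omega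
  rw [e2]
  have h1 : (m + 1).choose m = m + 1 := Nat.choose_succ_self_right m
  have h2 : m.choose (m - 1) = m := by
    obtain ⟨m', rfl⟩ : ∃ m', m = m' + 1 := ⟨m - 1, by omega⟩
    simp [Nat.choose_succ_self_right m']
  omega

/-- For an odd prime `r`, the polynomial `h(x^2+2) = ∑_{k=0}^{(r-1)/2} c_k x^(r-1-2k)`
(where `c_k = (r/(r-k)) * (r-k).choose k`) is irreducible over `ℚ`. -/
theorem h_of_x_sq_add_two_irreducible (r : ℕ) (hr : r.Prime) (hodd : Odd r) :
    Irreducible (∑ k ∈ Finset.range ((r - 1) / 2 + 1),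
      Polynomial.C (((r : ℚ) / ((r : ℚ) - (k : ℚ))) * ((r - k).choose k : ℚ)) *
        Polynomial.X ^ (r - 1 - 2 * k) : ℚ[X]) := by
  obtain ⟨m, rfl⟩ := hodd
  have hm : 1 ≤ m := by have := hr.two_le; omega
  set r := 2 * m + 1 with hrdef
  -- the integer polynomial
  set F : ℤ[X] := ∑ k ∈ Finset.range (m + 1),
      Polynomial.C ((ec r k : ℤ)) * Polynomial.X ^ (2 * m - 2 * k) with hF
  -- coefficients of F
  have hcoeff : ∀ n, F.coeff n =
      ∑ k ∈ Finset.range (m + 1), if n = 2 * m - 2 * k then (ec r k : ℤ) else 0 := by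
    intro n
    rw [hF, Polynomial.finset_sum_coeff]
    refine Finset.sum_congr rfl fun k _ => ?_
    rw [Polynomial.coeff_C_mul, Polynomial.coeff_X_pow]
    split_ifs <;> simp
  have hlead : F.coeff (2 * m) = 1 := by
    rw [hcoeff]
    rw [Finset.sum_eq_single_of_mem 0 (Finset.mem_range.mpr (by omega))]
    · simp [ec]
    · intro k hk hk0
      rw [if_neg]
      have : k ≤ m := by simpa using Nat.lt_succ_iff.mp (Finset.mem_range.mp hk)
      omega
  have hdegle : F.degree ≤ (2 * m : ℕ) := by
    rw [hF]
    refine (Polynomial.degree_sum_le _ _).trans ?_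
    refine Finset.sup_le fun k hk => ?_
    exact (Polynomial.degree_C_mul_X_pow_le _ _).trans
      (by exact_mod_cast Nat.cast_le.mpr (by omega : 2 * m - 2 * k ≤ 2 * m))
  have hmonic : F.Monic :=
    Polynomial.monic_of_natDegree_le_of_coeff_eq_one (2 * m)
      (Polynomial.natDegree_le_iff_degree_le.mpr hdegle) hlead
  have hdeg : F.degree = (2 * m : ℕ) :=
    le_antisymm hdegle (Polynomial.le_degree_of_ne_zero (by rw [hlead]; exact one_ne_zero))
  have hconst : F.coeff 0 = (r : ℤ) := by
    rw [hcoeff]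
    rw [Finset.sum_eq_single_of_mem m (Finset.mem_range.mpr (by omega))]
    · rw [if_pos (by omega), ec_last m hm]
    · intro k hk hkm
      rw [if_neg]
      have : k ≤ m := by simpa using Nat.lt_succ_iff.mp (Finset.mem_range.mp hk)
      omega
  have hrZ : Prime ((r : ℤ)) := Nat.prime_iff_prime_int.mp hr
  have hPprime : (Ideal.span {(r : ℤ)}).IsPrime :=
    (Ideal.span_singleton_prime (by exact_mod_cast hr.ne_zero)).mpr hrZ
  have hirr : Irreducible F := by
    refine Polynomial.irreducible_of_eisenstein_criterion hPprime ?_ ?_ ?_ ?_ hmonic.isPrimitive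
    · rw [hmonic.leadingCoeff]
      intro h
      rw [Ideal.mem_span_singleton] at h
      have := Int.le_of_dvd one_pos h
      have : (2 : ℤ) ≤ (r : ℤ) := by exact_mod_cast hr.two_le
      omega
    · intro n hn
      rw [hdeg, Nat.cast_lt] at hn
      rw [hcoeff]
      refine Ideal.sum_mem _ fun k hk => ?_
      have hkm : k ≤ m := Nat.lt_succ_iff.mp (Finset.mem_range.mp hk)
      split_ifs with h
      · have hk1 : 1 ≤ k := by omega
        rw [Ideal.mem_span_singleton]
        exact_mod_cast Int.natCast_dvd_natCast.mpr (ec_dvd r k hr hk1 (by omega))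
      · exact Ideal.zero_mem _
    · rw [hdeg]; exact_mod_cast Nat.pos_of_ne_zero (by omega)
    · rw [hconst, Ideal.span_singleton_pow, Ideal.mem_span_singleton]
      intro h
      have h1 := Int.le_of_dvd (by positivity) h
      have h2 : (2 : ℤ) ≤ (r : ℤ) := by exact_mod_cast hr.two_le
      nlinarith
  -- identify the rational polynomial with the image of F
  have hmap : (∑ k ∈ Finset.range ((r - 1) / 2 + 1),
      Polynomial.C (((r : ℚ) / ((r : ℚ) - (k : ℚ))) * ((r - k).choose k : ℚ)) *
        Polynomial.X ^ (r - 1 - 2 * k) : ℚ[X]) = F.map (Int.castRingHom ℚ) := by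
    rw [hF, Polynomial.map_sum]
    have hidx : (r - 1) / 2 + 1 = m + 1 := by omega
    rw [hidx]
    refine Finset.sum_congr rfl fun k hk => ?_
    have hkm : k ≤ m := Nat.lt_succ_iff.mp (Finset.mem_range.mp hk)
    rw [Polynomial.map_mul, Polynomial.map_C, Polynomial.map_pow, Polynomial.map_X]
    have hexp : r - 1 - 2 * k = 2 * m - 2 * k := by omega
    rw [hexp]
    congr 1
    rw [Polynomial.C_inj]
    simp only [eq_intCast, Int.cast_natCast]
    rcases Nat.eq_zero_or_pos k with rfl | hk1
    · have hr0 : (r : ℚ) ≠ 0 := by positivity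
      simp [ec, div_self hr0]
    · have hkey := ec_key r k hk1 (by omega)
      have hne : (r : ℚ) - (k : ℚ) ≠ 0 := by
        have : (k : ℚ) < (r : ℚ) := by exact_mod_cast (by omega : k < r)
        linarith
      have hcast : ((r : ℚ) - (k : ℚ)) * (ec r k : ℚ) = (r : ℚ) * ((r - k).choose k : ℚ) := by
        have := congrArg (fun n : ℕ => (n : ℚ)) hkey
        push_cast [Nat.cast_sub (by omega : k ≤ r)] at this
        push_cast
        linarith [this]
      rw [div_mul_eq_mul_div, div_eq_iff hne]
      linarith [hcast]
  rw [hmap]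
  exact (Polynomial.IsPrimitive.Int.irreducible_iff_irreducible_map_cast
    hmonic.isPrimitive).mp hirr
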